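/- Let G be a finitely generated group. Then the following are equivalent: (1) G is free abelian; (2) there is a finite symmetric generating set X of G such that Geo(G,X) is 1-locally testable; (3) there is a finite symmetric generating set X of G such that, with L = Geo(G,X), every nonempty word w over X satisfies w ∼_L w² (the syntactic semigroup of Geo(G,X) is idempotent). -/

import Mathlib

/-- `pre_{k-1}`, `suf_{k-1}` and `sub_k` agree: the equivalence `∼_k` on words. -/
def SimK {A : Type*} (k : ℕ) (u v : List A) : Prop :=
  u.take (k - 1) = v.take (k - 1) ∧
  u.drop (u.length - (k - 1)) = v.drop (v.length - (k - 1)) ∧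
  ∀ s : List A, s.length = k → (s <:+: u ↔ s <:+: v)

/-- A language `L` is `k`-locally testable if membership is invariant under `∼_k`. -/
def LocallyTestable {A : Type*} (k : ℕ) (L : Set (List A)) : Prop :=
  ∀ u v : List A, SimK k u v → (u ∈ L ↔ v ∈ L)

/-- The syntactic congruence of a language: `u ∼_L v` iff `sut ∈ L ↔ svt ∈ L` for all `s, t`. -/
def SynCong {A : Type*} (L : Set (List A)) (u v : List A) : Prop :=
  ∀ s t : List A, s ++ u ++ t ∈ L ↔ s ++ v ++ t ∈ L

/-- The element of `G` represented by a word over the generating set `X`. -/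
def wordProd {G : Type*} [Group G] {X : Set G} (w : List X) : G :=
  (w.map Subtype.val).prod

/-- A word over `X` is geodesic if no word representing the same element is shorter. -/
def IsGeodesic {G : Type*} [Group G] (X : Set G) (w : List X) : Prop :=
  ∀ v : List X, wordProd v = wordProd w → w.length ≤ v.length

/-- The language of all geodesic words over `X`. -/
def Geo {G : Type*} [Group G] (X : Set G) : Set (List X) :=
  {w | IsGeodesic X w}

/-- The `j`-th power of a word in the free monoid (concatenation of `j` copies). -/
def listPow {A : Type*} (w : List A) : ℕ → List A
  | 0 => []
  | n + 1 => w ++ listPow w n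

namespace Stmt17Aux

variable {G : Type*} [Group G] {X : Set G}

theorem wordProd_nil : wordProd ([] : List X) = 1 := rfl

theorem wordProd_cons (x : X) (w : List X) : wordProd (x :: w) = (x : G) * wordProd w := by
  simp [wordProd]

theorem wordProd_append (u v : List X) : wordProd (u ++ v) = wordProd u * wordProd v := by
  simp [wordProd]

theorem wordProd_singleton (x : X) : wordProd [x] = (x : G) := by
  simp [wordProd]

theorem listPow_nil {A : Type*} : ∀ n, listPow ([] : List A) n = []
  | 0 => rfl
  | n + 1 => by rw [listPow, listPow_nil n]; rfl

theorem wordProd_listPow (w : List X) : ∀ n, wordProd (listPow w n) = (wordProd w) ^ n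
  | 0 => by rw [listPow, pow_zero]; rfl
  | n + 1 => by rw [listPow, wordProd_append, wordProd_listPow w n, ← pow_succ']

theorem length_listPow {A : Type*} (w : List A) : ∀ n, (listPow w n).length = n * w.length
  | 0 => by simp [listPow]
  | n + 1 => by rw [listPow, List.length_append, length_listPow w n]; ring

/-- The inverse word. -/
def invWord (hsym : ∀ x ∈ X, x⁻¹ ∈ X) (w : List X) : List X :=
  w.reverse.map fun x : X => ⟨(x : G)⁻¹, hsym _ x.2⟩

theorem invWord_nil (hsym : ∀ x ∈ X, x⁻¹ ∈ X) : invWord hsym ([] : List X) = [] := rfl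

theorem invWord_cons (hsym : ∀ x ∈ X, x⁻¹ ∈ X) (a : X) (w : List X) :
    invWord hsym (a :: w) = invWord hsym w ++ [⟨(a : G)⁻¹, hsym _ a.2⟩] := by
  simp [invWord]

theorem wordProd_invWord (hsym : ∀ x ∈ X, x⁻¹ ∈ X) (w : List X) :
    wordProd (invWord hsym w) = (wordProd w)⁻¹ := by
  induction w with
  | nil => simp [invWord_nil, wordProd_nil]
  | cons a w ih =>
      rw [wordProd_cons, mul_inv_rev, invWord_cons, wordProd_append, ih,
        wordProd_singleton]

theorem length_invWord (hsym : ∀ x ∈ X, x⁻¹ ∈ X) (w : List X) :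
    (invWord hsym w).length = w.length := by simp [invWord]

theorem exists_word (hsym : ∀ x ∈ X, x⁻¹ ∈ X) (hgen : Subgroup.closure X = ⊤) (g : G) :
    ∃ w : List X, wordProd w = g := by
  have hg : g ∈ Subgroup.closure X := by rw [hgen]; trivial
  induction hg using Subgroup.closure_induction with
  | mem x hx => exact ⟨[⟨x, hx⟩], by simp [wordProd]⟩
  | one => exact ⟨[], rfl⟩
  | mul a b _ _ iha ihb =>
      obtain ⟨u, hu⟩ := iha; obtain ⟨v, hv⟩ := ihb
      exact ⟨u ++ v, by rw [wordProd_append, hu, hv]⟩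
  | inv a _ iha =>
      obtain ⟨u, hu⟩ := iha
      exact ⟨invWord hsym u, by rw [wordProd_invWord, hu]⟩

/-- Word norm. -/
noncomputable def normL (X : Set G) (g : G) : ℕ :=
  sInf {k | ∃ w : List X, w.length = k ∧ wordProd w = g}

theorem normL_le {w : List X} {g : G} (h : wordProd w = g) : normL X g ≤ w.length :=
  Nat.sInf_le ⟨w, rfl, h⟩

theorem normL_spec (hword : ∀ g : G, ∃ w : List X, wordProd w = g) (g : G) :
    ∃ w : List X, w.length = normL X g ∧ wordProd w = g := by
  obtain ⟨w, hw⟩ := hword g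
  have : normL X g ∈ {k | ∃ w : List X, w.length = k ∧ wordProd w = g} :=
    Nat.sInf_mem ⟨w.length, ⟨w, rfl, hw⟩⟩
  exact this

theorem geodesic_of_length_eq {w : List X} (h : w.length = normL X (wordProd w)) :
    w ∈ Geo X := by
  intro v hv
  calc w.length = normL X (wordProd w) := h
    _ ≤ v.length := normL_le hv

theorem length_eq_of_geodesic (hword : ∀ g : G, ∃ w : List X, wordProd w = g)
    {w : List X} (h : w ∈ Geo X) : w.length = normL X (wordProd w) := by
  obtain ⟨v, hl, hp⟩ := normL_spec hword (wordProd w)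
  exact le_antisymm (hl ▸ h v hp) (normL_le rfl)

theorem normL_one : normL X (1 : G) = 0 :=
  Nat.le_zero.mp (normL_le (w := []) rfl)

theorem eq_one_of_normL_eq_zero (hword : ∀ g : G, ∃ w : List X, wordProd w = g)
    {g : G} (h : normL X g = 0) : g = 1 := by
  obtain ⟨w, hl, hp⟩ := normL_spec hword g
  rw [h, List.length_eq_zero_iff] at hl
  rw [hl] at hp
  exact hp ▸ rfl

theorem normL_mul_le (hword : ∀ g : G, ∃ w : List X, wordProd w = g) (g h : G) :
    normL X (g * h) ≤ normL X g + normL X h := by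
  obtain ⟨u, hul, hup⟩ := normL_spec hword g
  obtain ⟨v, hvl, hvp⟩ := normL_spec hword h
  have := normL_le (w := u ++ v) (g := g * h) (by rw [wordProd_append, hup, hvp])
  simpa [hul, hvl] using this

theorem normL_inv_le (hsym : ∀ x ∈ X, x⁻¹ ∈ X)
    (hword : ∀ g : G, ∃ w : List X, wordProd w = g) (g : G) :
    normL X g⁻¹ ≤ normL X g := by
  obtain ⟨u, hul, hup⟩ := normL_spec hword g
  have := normL_le (w := invWord hsym u) (g := g⁻¹) (by rw [wordProd_invWord, hup])
  simpa [length_invWord, hul] using this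

theorem normL_inv (hsym : ∀ x ∈ X, x⁻¹ ∈ X)
    (hword : ∀ g : G, ∃ w : List X, wordProd w = g) (g : G) :
    normL X g⁻¹ = normL X g :=
  le_antisymm (normL_inv_le hsym hword g)
    (by simpa using normL_inv_le hsym hword g⁻¹)

theorem ball_finite (hword : ∀ g : G, ∃ w : List X, wordProd w = g)
    (hX : X.Finite) (n : ℕ) : {g : G | normL X g ≤ n}.Finite := by
  haveI := hX.to_subtype
  apply Set.Finite.subset ((List.finite_length_le ↥X n).image wordProd)
  intro g hg
  obtain ⟨w, hl, hp⟩ := normL_spec hword g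
  refine ⟨w, ?_, hp⟩
  simp only [Set.mem_setOf_eq] at hg ⊢
  omega

end Stmt17Aux
namespace Stmt17Aux

variable {G : Type*} [Group G] {X : Set G}

theorem nil_geodesic : ([] : List X) ∈ Geo X := fun v _ => Nat.zero_le _

theorem geo_listPow (hid : ∀ w : List X, w ≠ [] → SynCong (Geo X) w (w ++ w))
    {w : List X} (hw : w ∈ Geo X) : ∀ n, listPow w (n + 1) ∈ Geo X := by
  by_cases hnil : w = []
  · intro n; rw [hnil, listPow_nil]; exact nil_geodesic
  · intro n
    induction n with
    | zero => simpa [listPow] using hw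
    | succ n ih =>
        have h1 : [] ++ w ++ listPow w n ∈ Geo X := by simpa [listPow] using ih
        have h2 := (hid w hnil [] (listPow w n)).mp h1
        have heq : [] ++ (w ++ w) ++ listPow w n = listPow w (n + 2) := by
          simp [listPow]
        rw [heq] at h2
        exact h2

theorem normL_pow (hword : ∀ g : G, ∃ w : List X, wordProd w = g)
    (hid : ∀ w : List X, w ≠ [] → SynCong (Geo X) w (w ++ w)) (g : G) (n : ℕ) :
    normL X (g ^ (n + 1)) = (n + 1) * normL X g := by
  obtain ⟨w, hl, hp⟩ := normL_spec hword g
  have hgeo : w ∈ Geo X := geodesic_of_length_eq (by rw [hp]; exact hl)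
  have h2 : listPow w (n + 1) ∈ Geo X := geo_listPow hid hgeo n
  have h3 := length_eq_of_geodesic hword h2
  rw [length_listPow, wordProd_listPow, hp, hl] at h3
  exact h3.symm

theorem pow_ne_one (hword : ∀ g : G, ∃ w : List X, wordProd w = g)
    (hid : ∀ w : List X, w ≠ [] → SynCong (Geo X) w (w ++ w))
    {g : G} (hg : g ≠ 1) (n : ℕ) : g ^ (n + 1) ≠ 1 := by
  intro h
  have h1 := normL_pow hword hid g n
  rw [h, normL_one] at h1
  rcases Nat.mul_eq_zero.mp h1.symm with h2 | h2
  · omega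
  · exact hg (eq_one_of_normL_eq_zero hword h2)

theorem normL_conj_le (hsym : ∀ x ∈ X, x⁻¹ ∈ X)
    (hword : ∀ g : G, ∃ w : List X, wordProd w = g)
    (hid : ∀ w : List X, w ≠ [] → SynCong (Geo X) w (w ++ w)) (g h : G) :
    normL X (g * h * g⁻¹) ≤ normL X h := by
  have key : ∀ n : ℕ, (n + 1) * normL X (g * h * g⁻¹) ≤ (n + 1) * normL X h
      + 2 * normL X g := by
    intro n
    have e : (g * h * g⁻¹) ^ (n + 1) = g * h ^ (n + 1) * g⁻¹ := conj_pow
    calc (n + 1) * normL X (g * h * g⁻¹)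
        = normL X ((g * h * g⁻¹) ^ (n + 1)) := (normL_pow hword hid _ n).symm
      _ = normL X (g * h ^ (n + 1) * g⁻¹) := by rw [e]
      _ ≤ normL X (g * h ^ (n + 1)) + normL X g⁻¹ := normL_mul_le hword _ _
      _ ≤ normL X g + normL X (h ^ (n + 1)) + normL X g⁻¹ :=
          Nat.add_le_add_right (normL_mul_le hword _ _) _
      _ = (n + 1) * normL X h + 2 * normL X g := by
          rw [normL_pow hword hid, normL_inv hsym hword]; ring
  by_contra hlt
  push_neg at hlt
  have := key (2 * normL X g)
  nlinarith [this, hlt]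

theorem normL_conj (hsym : ∀ x ∈ X, x⁻¹ ∈ X)
    (hword : ∀ g : G, ∃ w : List X, wordProd w = g)
    (hid : ∀ w : List X, w ≠ [] → SynCong (Geo X) w (w ++ w)) (g h : G) :
    normL X (g * h * g⁻¹) = normL X h := by
  refine le_antisymm (normL_conj_le hsym hword hid g h) ?_
  have h2 := normL_conj_le hsym hword hid g⁻¹ (g * h * g⁻¹)
  have e : g⁻¹ * (g * h * g⁻¹) * g⁻¹⁻¹ = h := by group
  rwa [e] at h2

theorem mem_center_of_comm (hgen : Subgroup.closure X = ⊤) {g : G}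
    (hc : ∀ x ∈ X, g * x = x * g) : g ∈ Subgroup.center G := by
  rw [Subgroup.mem_center_iff]
  intro h
  have hh : h ∈ Subgroup.closure X := by rw [hgen]; trivial
  induction hh using Subgroup.closure_induction with
  | mem x hx => exact (hc x hx).symm
  | one => simp
  | mul a b _ _ iha ihb => rw [mul_assoc, ihb, ← mul_assoc, iha, mul_assoc]
  | inv a _ iha =>
      have h1 : a⁻¹ * (a * g) * a⁻¹ = a⁻¹ * (g * a) * a⁻¹ := by rw [iha]
      simpa [mul_assoc] using h1.symm

theorem conj_eq_of_center {a b x : G} (h : a⁻¹ * b ∈ Subgroup.center G) :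
    b * x * b⁻¹ = a * x * a⁻¹ := by
  have h1 : x * (a⁻¹ * b) = (a⁻¹ * b) * x := Subgroup.mem_center_iff.mp h x
  have h2 := congrArg (fun y => a * y * b⁻¹) h1
  simpa [mul_assoc] using h2.symm

theorem finite_quotient_center (hX : X.Finite) (hsym : ∀ x ∈ X, x⁻¹ ∈ X)
    (hgen : Subgroup.closure X = ⊤)
    (hword : ∀ g : G, ∃ w : List X, wordProd w = g)
    (hid : ∀ w : List X, w ≠ [] → SynCong (Geo X) w (w ++ w)) :
    Finite (G ⧸ Subgroup.center G) := by
  haveI := hX.to_subtype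
  have hBfin : {g : G | normL X g ≤ 1}.Finite := ball_finite hword hX 1
  haveI := hBfin.to_subtype
  let f : G → (↥X → ↥{g : G | normL X g ≤ 1}) := fun g x =>
    ⟨g * x * g⁻¹, by
      show normL X _ ≤ 1
      rw [normL_conj hsym hword hid g (x : G)]
      exact normL_le (wordProd_singleton x)⟩
  have hwd : ∀ a b : G, a⁻¹ * b ∈ Subgroup.center G → f a = f b := by
    intro a b hab
    funext x
    exact Subtype.ext (conj_eq_of_center hab).symm
  refine Finite.of_injective
    (fun q : G ⧸ Subgroup.center G =>
      Quotient.liftOn' q f (fun a b hab => hwd a b (QuotientGroup.leftRel_apply.mp hab)))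
    ?_
  intro q1 q2 h
  induction q1 using Quotient.inductionOn'
  induction q2 using Quotient.inductionOn'
  rename_i a b
  have hx : ∀ x ∈ X, (a⁻¹ * b) * x = x * (a⁻¹ * b) := by
    intro x hx
    have h1 : a * x * a⁻¹ = b * x * b⁻¹ := by
      have h0 : f a = f b := h
      have := congrFun h0 ⟨x, hx⟩
      exact congrArg Subtype.val this
    have h2 := congrArg (fun y => a⁻¹ * y * b) h1
    simpa [mul_assoc] using h2.symm
  have : a⁻¹ * b ∈ Subgroup.center G := mem_center_of_comm hgen hx
  exact Quotient.sound' (QuotientGroup.leftRel_apply.mpr this)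

end Stmt17Aux
namespace Stmt17Aux

open scoped commutatorElement

variable {G : Type*} [Group G] {X : Set G}

theorem commutator_eq_of_center {a₁ a₂ b₁ b₂ : G}
    (h₁ : a₁⁻¹ * b₁ ∈ Subgroup.center G) (h₂ : a₂⁻¹ * b₂ ∈ Subgroup.center G) :
    ⁅b₁, b₂⁆ = ⁅a₁, a₂⁆ := by
  rw [commutatorElement_def, commutatorElement_def]
  have e1 : b₁ * b₂ * b₁⁻¹ = a₁ * b₂ * a₁⁻¹ := conj_eq_of_center h₁
  rw [show b₁ * b₂ * b₁⁻¹ * b₂⁻¹ = (b₁ * b₂ * b₁⁻¹) * b₂⁻¹ from rfl, e1]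
  -- now: a₁ * b₂ * a₁⁻¹ * b₂⁻¹ = a₁ * a₂ * a₁⁻¹ * a₂⁻¹, where b₂ = a₂ * z
  have hz : ∀ g : G, g * (a₂⁻¹ * b₂) = (a₂⁻¹ * b₂) * g := Subgroup.mem_center_iff.mp h₂
  have hb : b₂ = a₂ * (a₂⁻¹ * b₂) := by group
  set z := a₂⁻¹ * b₂ with hzdef
  have hbinv : b₂⁻¹ = z⁻¹ * a₂⁻¹ := by rw [hb]; group
  calc a₁ * b₂ * a₁⁻¹ * b₂⁻¹
      = a₁ * (a₂ * z) * a₁⁻¹ * (z⁻¹ * a₂⁻¹) := by rw [← hb, ← hbinv]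
    _ = a₁ * a₂ * (z * a₁⁻¹ * z⁻¹) * a₂⁻¹ := by simp [mul_assoc]
    _ = a₁ * a₂ * (a₁⁻¹ * z * z⁻¹) * a₂⁻¹ := by rw [show z * a₁⁻¹ = a₁⁻¹ * z from (hz a₁⁻¹).symm]
    _ = a₁ * a₂ * a₁⁻¹ * a₂⁻¹ := by simp [mul_assoc]

theorem finite_commutatorSet_of_finite_quotient
    (hq : Finite (G ⧸ Subgroup.center G)) : Finite (commutatorSet G) := by
  let ψ : (G ⧸ Subgroup.center G) × (G ⧸ Subgroup.center G) → G := fun p =>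
    ⁅(Quotient.out p.1 : G), (Quotient.out p.2 : G)⁆
  have hsub : commutatorSet G ⊆ Set.range ψ := by
    rintro c ⟨a, b, rfl⟩
    refine ⟨(QuotientGroup.mk a, QuotientGroup.mk b), ?_⟩
    apply commutator_eq_of_center
    · exact QuotientGroup.leftRel_apply.mp
        (Quotient.exact' (Quotient.out_eq' (QuotientGroup.mk a)).symm)
    · exact QuotientGroup.leftRel_apply.mp
        (Quotient.exact' (Quotient.out_eq' (QuotientGroup.mk b)).symm)
  exact ((Set.finite_range ψ).subset hsub).to_subtype

theorem comm_of_all (hX : X.Finite) (hsym : ∀ x ∈ X, x⁻¹ ∈ X)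
    (hgen : Subgroup.closure X = ⊤)
    (hword : ∀ g : G, ∃ w : List X, wordProd w = g)
    (hid : ∀ w : List X, w ≠ [] → SynCong (Geo X) w (w ++ w)) (a b : G) :
    a * b = b * a := by
  haveI hq := finite_quotient_center hX hsym hgen hword hid
  haveI := finite_commutatorSet_of_finite_quotient hq
  haveI : Finite (_root_.commutator G) := inferInstance
  have hc : ⁅a, b⁆ ∈ _root_.commutator G :=
    Subgroup.commutator_mem_commutator (Subgroup.mem_top a) (Subgroup.mem_top b)
  have hfo := isOfFinOrder_of_finite (⟨⁅a, b⁆, hc⟩ : _root_.commutator G)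
  obtain ⟨m, hm, hx⟩ := isOfFinOrder_iff_pow_eq_one.mp hfo
  have hpow : ⁅a, b⁆ ^ m = 1 := by
    have := congrArg (Subtype.val) hx
    simpa using this
  by_contra hne
  have h1 : ⁅a, b⁆ ≠ 1 := fun h => hne (commutatorElement_eq_one_iff_mul_comm.mp h)
  obtain ⟨k, rfl⟩ : ∃ k, m = k + 1 := ⟨m - 1, by omega⟩
  exact pow_ne_one hword hid h1 k hpow

/-- A finitely generated torsion-free abelian group is free abelian. -/
theorem free_abelian_of_fg_tf_comm {G : Type*} [Group G]
    (hcomm : ∀ a b : G, a * b = b * a) (hfg : Group.FG G)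
    (htf : ∀ g : G, g ≠ 1 → ∀ n : ℕ, g ^ (n + 1) ≠ 1) :
    ∃ n : ℕ, Nonempty (G ≃* Multiplicative (Fin n → ℤ)) := by
  letI : CommGroup G := { ‹Group G› with mul_comm := hcomm }
  haveI : Module.Finite ℤ (Additive G) :=
    Module.Finite.iff_addGroup_fg.mpr (GroupFG.iff_add_fg.mp hfg)
  haveI : NoZeroSMulDivisors ℤ (Additive G) := by
    constructor
    intro c x hcx
    by_contra hne
    push_neg at hne
    obtain ⟨hc, hx⟩ := hne
    set g : G := Additive.toMul x with hg
    have hg1 : g ≠ 1 := hx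
    have hzpow : g ^ c = 1 := hcx
    have hnat : g ^ (c.natAbs) = 1 := by
      rcases Int.natAbs_eq c with h | h
      · rw [← zpow_natCast, ← h, hzpow]
      · rw [← zpow_natCast, ← neg_neg (c.natAbs : ℤ), ← h, zpow_neg, hzpow, inv_one]
    obtain ⟨k, hk⟩ : ∃ k, c.natAbs = k + 1 :=
      ⟨c.natAbs - 1, by have := Int.natAbs_pos.mpr hc; omega⟩
    exact htf g hg1 k (hk ▸ hnat)
  haveI : Module.Free ℤ (Additive G) := Module.free_of_finite_type_torsion_free'
  let ι := Module.Free.ChooseBasisIndex ℤ (Additive G)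
  let b := (Module.Free.chooseBasis ℤ (Additive G)).reindex (Fintype.equivFin ι)
  exact ⟨Fintype.card ι, ⟨AddEquiv.toMultiplicativeRight b.equivFun.toAddEquiv⟩⟩

theorem three_to_one (hfg : ∃ S : Set G, S.Finite ∧ Subgroup.closure S = ⊤)
    (hX : X.Finite) (hsym : ∀ x ∈ X, x⁻¹ ∈ X) (hgen : Subgroup.closure X = ⊤)
    (hid : ∀ w : List X, w ≠ [] → SynCong (Geo X) w (w ++ w)) :
    ∃ n : ℕ, Nonempty (G ≃* Multiplicative (Fin n → ℤ)) := by
  have hword := exists_word hsym hgen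
  have hfgG : Group.FG G := by
    rw [Group.fg_iff]
    obtain ⟨S, h1, h2⟩ := hfg
    exact ⟨S, h2, h1⟩
  refine free_abelian_of_fg_tf_comm (comm_of_all hX hsym hgen hword hid) hfgG ?_
  intro g hg n
  exact pow_ne_one hword hid hg n

end Stmt17Aux
namespace Stmt17Aux

/-! ### Integer list lemmas -/

theorem int_sum_le (l : List ℤ) : l.sum ≤ ((l.map Int.natAbs).sum : ℤ) := by
  induction l with
  | nil => simp
  | cons x l ih =>
      simp only [List.sum_cons, List.map_cons, List.sum_cons]
      rw [Nat.cast_add]; omega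

theorem int_neg_sum_le (l : List ℤ) : -l.sum ≤ ((l.map Int.natAbs).sum : ℤ) := by
  induction l with
  | nil => simp
  | cons x l ih =>
      simp only [List.sum_cons, List.map_cons, List.sum_cons]
      rw [Nat.cast_add]; omega

theorem int_natAbs_sum_le (l : List ℤ) : l.sum.natAbs ≤ (l.map Int.natAbs).sum := by
  have h1 := int_sum_le l
  have h2 := int_neg_sum_le l
  omega

theorem int_sum_neg_wit (l : List ℤ) (hb : ∃ b ∈ l, b < 0) :
    l.sum + 2 ≤ ((l.map Int.natAbs).sum : ℤ) := by
  induction l with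
  | nil => simp at hb
  | cons x l ih =>
      simp only [List.sum_cons, List.map_cons, List.sum_cons]
      obtain ⟨b, hbmem, hbneg⟩ := hb
      rcases List.mem_cons.mp hbmem with rfl | hbl
      · have := int_sum_le l; rw [Nat.cast_add]; omega
      · have := ih ⟨b, hbl, hbneg⟩
        rw [Nat.cast_add]; omega

theorem int_sum_pos_wit (l : List ℤ) (ha : ∃ a ∈ l, 0 < a) :
    -l.sum + 2 ≤ ((l.map Int.natAbs).sum : ℤ) := by
  induction l with
  | nil => simp at ha
  | cons x l ih =>
      simp only [List.sum_cons, List.map_cons, List.sum_cons]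
      obtain ⟨b, hbmem, hbpos⟩ := ha
      rcases List.mem_cons.mp hbmem with rfl | hbl
      · have := int_neg_sum_le l; rw [Nat.cast_add]; omega
      · have := ih ⟨b, hbl, hbpos⟩
        rw [Nat.cast_add]; omega

theorem int_sum_mixed (l : List ℤ) (ha : ∃ a ∈ l, 0 < a) (hb : ∃ b ∈ l, b < 0) :
    l.sum.natAbs < (l.map Int.natAbs).sum := by
  have h1 := int_sum_neg_wit l hb
  have h2 := int_sum_pos_wit l ha
  omega

theorem int_sum_nonneg_eq (l : List ℤ) (h : ∀ a ∈ l, 0 ≤ a) :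
    l.sum.natAbs = (l.map Int.natAbs).sum := by
  induction l with
  | nil => simp
  | cons x l ih =>
      have hs : 0 ≤ l.sum := List.sum_nonneg fun a ha => h a (List.mem_cons.mpr (Or.inr ha))
      have hx : 0 ≤ x := h x (List.mem_cons.mpr (Or.inl rfl))
      have := ih fun a ha => h a (List.mem_cons.mpr (Or.inr ha))
      simp only [List.sum_cons, List.map_cons, List.sum_cons]
      omega

theorem list_sum_nonpos (l : List ℤ) (h : ∀ a ∈ l, a ≤ 0) : l.sum ≤ 0 := by
  induction l with
  | nil => simp
  | cons x l ih =>
      have := ih fun a ha => h a (List.mem_cons.mpr (Or.inr ha))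
      have := h x (List.mem_cons.mpr (Or.inl rfl))
      simp only [List.sum_cons]; omega

theorem int_sum_nonpos_eq (l : List ℤ) (h : ∀ a ∈ l, a ≤ 0) :
    l.sum.natAbs = (l.map Int.natAbs).sum := by
  induction l with
  | nil => simp
  | cons x l ih =>
      have hs : l.sum ≤ 0 := list_sum_nonpos l fun a ha => h a (List.mem_cons.mpr (Or.inr ha))
      have hx : x ≤ 0 := h x (List.mem_cons.mpr (Or.inl rfl))
      have := ih fun a ha => h a (List.mem_cons.mpr (Or.inr ha))
      simp only [List.sum_cons, List.map_cons, List.sum_cons]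
      omega

theorem singleton_infix {A : Type*} (a : A) (l : List A) : [a] <:+: l ↔ a ∈ l := by
  constructor
  · rintro ⟨s, t, rfl⟩; simp
  · intro h
    obtain ⟨s, t, rfl⟩ := List.append_of_mem h
    exact ⟨s, t, by simp⟩

theorem sum_flatMap {A : Type*} (f : A → List (Fin 0 → ℤ)) : True := trivial

/-! ### The free abelian model -/

section Model

variable {G : Type*} [Group G] {n : ℕ} (e : G ≃* Multiplicative (Fin n → ℤ))

/-- The coordinate vector of a group element. -/
def vfun (g : G) : Fin n → ℤ := Multiplicative.toAdd (e g)

theorem vfun_mul (g h : G) : vfun e (g * h) = vfun e g + vfun e h := by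
  simp [vfun]

theorem vfun_one : vfun e (1 : G) = 0 := by simp [vfun]

theorem vfun_inv (g : G) : vfun e g⁻¹ = -vfun e g := by simp [vfun]

theorem vfun_inj : Function.Injective (vfun e) := by
  intro a b h
  have : e a = e b := Multiplicative.toAdd.injective h
  exact e.injective this

theorem vfun_symm_ofAdd (u : Fin n → ℤ) :
    vfun e (e.symm (Multiplicative.ofAdd u)) = u := by simp [vfun]

/-- The standard symmetric generating set. -/
def XSet : Set G :=
  vfun e ⁻¹' ((Set.range fun i : Fin n => Pi.single i (1 : ℤ)) ∪
    (Set.range fun i : Fin n => -Pi.single i (1 : ℤ)))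

theorem mem_XSet {g : G} : g ∈ XSet e ↔
    ∃ i : Fin n, vfun e g = Pi.single i 1 ∨ vfun e g = -Pi.single i 1 := by
  simp only [XSet, Set.mem_preimage, Set.mem_union, Set.mem_range]
  constructor
  · rintro (⟨i, hi⟩ | ⟨i, hi⟩) <;> exact ⟨i, by tauto⟩
  · rintro ⟨i, hi | hi⟩
    · exact Or.inl ⟨i, hi.symm⟩
    · exact Or.inr ⟨i, hi.symm⟩

theorem XSet_finite : (XSet e).Finite :=
  Set.Finite.preimage (vfun_inj e).injOn
    ((Set.finite_range _).union (Set.finite_range _))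

theorem XSet_symm : ∀ x ∈ XSet e, x⁻¹ ∈ XSet e := by
  intro x hx
  obtain ⟨i, hi | hi⟩ := (mem_XSet e).mp hx <;>
    refine (mem_XSet e).mpr ⟨i, ?_⟩ <;> rw [vfun_inv, hi] <;> simp

/-- Positive and negative letters. -/
def xpos (i : Fin n) : ↥(XSet e) :=
  ⟨e.symm (Multiplicative.ofAdd (Pi.single i 1)),
    (mem_XSet e).mpr ⟨i, Or.inl (vfun_symm_ofAdd e _)⟩⟩

def xneg (i : Fin n) : ↥(XSet e) :=
  ⟨e.symm (Multiplicative.ofAdd (-Pi.single i 1)),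
    (mem_XSet e).mpr ⟨i, Or.inr (vfun_symm_ofAdd e _)⟩⟩

theorem vfun_xpos (i : Fin n) : vfun e ↑(xpos e i) = Pi.single i 1 :=
  vfun_symm_ofAdd e _

theorem vfun_xneg (i : Fin n) : vfun e ↑(xneg e i) = -Pi.single i 1 :=
  vfun_symm_ofAdd e _

theorem vfun_wordProd (w : List ↥(XSet e)) :
    vfun e (wordProd w) = (w.map fun x : ↥(XSet e) => vfun e ↑x).sum := by
  induction w with
  | nil => rw [wordProd_nil, vfun_one]; rfl
  | cons x w ih => rw [wordProd_cons, vfun_mul, ih]; simp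

theorem list_sum_apply (l : List (Fin n → ℤ)) (i : Fin n) :
    l.sum i = (l.map fun u => u i).sum := by
  induction l with
  | nil => rfl
  | cons x l ih => simp [ih]

/-- The coordinate list. -/
def coordList (w : List ↥(XSet e)) (i : Fin n) : List ℤ :=
  w.map fun x : ↥(XSet e) => vfun e ↑x i

theorem mem_coordList {w : List ↥(XSet e)} {i : Fin n} (y : ↥(XSet e)) (hy : y ∈ w) :
    vfun e ↑y i ∈ coordList e w i :=
  List.mem_map_of_mem hy

theorem vfun_wordProd_apply (w : List ↥(XSet e)) (i : Fin n) :
    vfun e (wordProd w) i = (coordList e w i).sum := by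
  rw [vfun_wordProd, list_sum_apply, coordList, List.map_map]; rfl

theorem sum_single_abs (j : Fin n) (c : ℤ) :
    ∑ i : Fin n, ((Pi.single j c : Fin n → ℤ) i).natAbs = c.natAbs := by
  rw [Finset.sum_eq_single j]
  · simp
  · intro b _ hb; simp [Pi.single_eq_of_ne hb]
  · intro h; exact absurd (Finset.mem_univ j) h

theorem letter_abs (x : ↥(XSet e)) : ∑ i : Fin n, (vfun e ↑x i).natAbs = 1 := by
  obtain ⟨j, hj | hj⟩ := (mem_XSet e).mp x.2
  · rw [hj]; simpa using sum_single_abs j 1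
  · rw [hj]
    simp only [Pi.neg_apply, Int.natAbs_neg]
    simpa using sum_single_abs j 1

theorem length_eq_sum (w : List ↥(XSet e)) :
    w.length = ∑ i : Fin n, ((coordList e w i).map Int.natAbs).sum := by
  induction w with
  | nil => simp [coordList]
  | cons x w ih =>
      have : ∀ i, ((coordList e (x :: w) i).map Int.natAbs).sum
          = (vfun e ↑x i).natAbs + ((coordList e w i).map Int.natAbs).sum := by
        intro i; simp [coordList]
      rw [List.length_cons, ih]
      rw [Finset.sum_congr rfl fun i _ => this i, Finset.sum_add_distrib, letter_abs]
      omega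

theorem norm_le_length (w : List ↥(XSet e)) :
    ∑ i : Fin n, (vfun e (wordProd w) i).natAbs ≤ w.length := by
  rw [length_eq_sum]
  refine Finset.sum_le_sum fun i _ => ?_
  rw [vfun_wordProd_apply]
  exact int_natAbs_sum_le _

/-- No coordinate sees both signs. -/
def NoMix (w : List ↥(XSet e)) : Prop :=
  ∀ i : Fin n, (∀ x ∈ w, 0 ≤ vfun e ↑x i) ∨ (∀ x ∈ w, vfun e ↑x i ≤ 0)

theorem eq_iff_noMix (w : List ↥(XSet e)) :
    (∑ i : Fin n, (vfun e (wordProd w) i).natAbs = w.length) ↔ NoMix e w := by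
  constructor
  · intro h
    by_contra hno
    unfold NoMix at hno
    push_neg at hno
    obtain ⟨i, ⟨x, hx, hxneg⟩, ⟨y, hy, hypos⟩⟩ := hno
    have hlt : ∑ i : Fin n, (vfun e (wordProd w) i).natAbs
        < ∑ i : Fin n, ((coordList e w i).map Int.natAbs).sum := by
      refine Finset.sum_lt_sum (fun j _ => ?_) ⟨i, Finset.mem_univ i, ?_⟩
      · rw [vfun_wordProd_apply]; exact int_natAbs_sum_le _
      · rw [vfun_wordProd_apply]
        refine int_sum_mixed _ ⟨vfun e ↑y i, ?_, by omega⟩ ⟨vfun e ↑x i, ?_, by omega⟩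
        · exact mem_coordList e y hy
        · exact mem_coordList e x hx
    rw [← length_eq_sum] at hlt
    omega
  · intro h
    rw [length_eq_sum]
    refine Finset.sum_congr rfl fun i _ => ?_
    rw [vfun_wordProd_apply]
    rcases h i with hp | hp
    · refine int_sum_nonneg_eq _ fun a ha => ?_
      obtain ⟨x, hx, rfl⟩ := List.mem_map.mp (show a ∈ w.map fun x : ↥(XSet e) => vfun e ↑x i from ha)
      exact hp x hx
    · refine int_sum_nonpos_eq _ fun a ha => ?_
      obtain ⟨x, hx, rfl⟩ := List.mem_map.mp (show a ∈ w.map fun x : ↥(XSet e) => vfun e ↑x i from ha)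
      exact hp x hx

end Model

end Stmt17Aux
namespace Stmt17Aux

section Model2

variable {G : Type*} [Group G] {n : ℕ} (e : G ≃* Multiplicative (Fin n → ℤ))

theorem list_sum_flatMap {A B : Type*} [AddCommMonoid B] (f : A → List B) (l : List A) :
    (l.flatMap f).sum = (l.map fun a => (f a).sum).sum := by
  induction l with
  | nil => rfl
  | cons x l ih => simp [List.flatMap_cons, ih]

/-- Canonical word for a vector. -/
def Wd (v : Fin n → ℤ) : List ↥(XSet e) :=
  (List.finRange n).flatMap fun i =>
    List.replicate (v i).natAbs (if 0 ≤ v i then xpos e i else xneg e i)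

theorem length_Wd (v : Fin n → ℤ) : (Wd e v).length = ∑ i : Fin n, (v i).natAbs := by
  rw [Wd, List.length_flatMap, Fin.sum_univ_def]
  congr 1
  refine List.map_congr_left fun i _ => ?_
  simp

theorem smul_single_int (k : ℕ) (i : Fin n) :
    (k • (Pi.single i 1 : Fin n → ℤ)) = Pi.single i (k : ℤ) := by
  funext j
  by_cases hj : j = i
  · subst hj; simp
  · simp [Pi.single_eq_of_ne hj]

theorem block_sum (v : Fin n → ℤ) (i : Fin n) :
    ((List.replicate (v i).natAbs (if 0 ≤ v i then xpos e i else xneg e i)).map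
      fun x : ↥(XSet e) => vfun e ↑x).sum = Pi.single i (v i) := by
  by_cases h : 0 ≤ v i
  · rw [if_pos h]
    rw [List.map_replicate, vfun_xpos, List.sum_replicate, smul_single_int,
      Int.natAbs_of_nonneg h]
  · rw [if_neg h]
    rw [List.map_replicate, vfun_xneg, List.sum_replicate]
    have : (v i).natAbs • (-Pi.single i 1 : Fin n → ℤ)
        = -((v i).natAbs • (Pi.single i 1 : Fin n → ℤ)) := by
      rw [smul_neg]
    rw [this, smul_single_int]
    funext j
    by_cases hj : j = i
    · subst hj
      simp only [Pi.neg_apply, Pi.single_eq_same]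
      omega
    · simp [Pi.single_eq_of_ne hj]

theorem vfun_Wd (v : Fin n → ℤ) : vfun e (wordProd (Wd e v)) = v := by
  rw [vfun_wordProd, Wd, List.map_flatMap, list_sum_flatMap]
  calc (List.map _ (List.finRange n)).sum
      = (List.map (fun i : Fin n => Pi.single i (v i)) (List.finRange n)).sum := by
        refine congrArg _ (List.map_congr_left fun i _ => ?_)
        exact block_sum e v i
    _ = ∑ i : Fin n, Pi.single i (v i) := (Fin.sum_univ_def _).symm
    _ = v := Finset.univ_sum_single v

theorem wordProd_Wd (g : G) : wordProd (Wd e (vfun e g)) = g :=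
  vfun_inj e (vfun_Wd e (vfun e g))

theorem wordProd_mem_closure {X : Set G} (w : List ↥X) :
    wordProd w ∈ Subgroup.closure X := by
  induction w with
  | nil => exact (Subgroup.closure X).one_mem
  | cons x w ih =>
      rw [wordProd_cons]
      exact (Subgroup.closure X).mul_mem (Subgroup.subset_closure x.2) ih

theorem XSet_gen : Subgroup.closure (XSet e) = ⊤ := by
  rw [eq_top_iff]
  intro g _
  rw [← wordProd_Wd e g]
  exact wordProd_mem_closure _

theorem geodesic_iff_noMix (w : List ↥(XSet e)) : w ∈ Geo (XSet e) ↔ NoMix e w := by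
  constructor
  · intro hgeo
    refine (eq_iff_noMix e w).mp (le_antisymm (norm_le_length e w) ?_)
    have h1 := hgeo (Wd e (vfun e (wordProd w))) (wordProd_Wd e (wordProd w))
    rwa [length_Wd] at h1
  · intro hno v hv
    have h1 : ∑ i : Fin n, (vfun e (wordProd w) i).natAbs = w.length :=
      (eq_iff_noMix e w).mpr hno
    have h2 := norm_le_length e v
    rw [hv] at h2
    omega

theorem XSet_lt : LocallyTestable 1 (Geo (XSet e)) := by
  intro u v h
  obtain ⟨-, -, hsub⟩ := h
  have hmem : ∀ x : ↥(XSet e), x ∈ u ↔ x ∈ v := by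
    intro x
    rw [← singleton_infix x u, ← singleton_infix x v]
    exact hsub [x] rfl
  rw [geodesic_iff_noMix, geodesic_iff_noMix]
  constructor <;> intro hno i <;> rcases hno i with hp | hp
  · exact Or.inl fun x hx => hp x ((hmem x).mpr hx)
  · exact Or.inr fun x hx => hp x ((hmem x).mpr hx)
  · exact Or.inl fun x hx => hp x ((hmem x).mp hx)
  · exact Or.inr fun x hx => hp x ((hmem x).mp hx)

end Model2

theorem one_to_two {G : Type*} [Group G] {n : ℕ} (e : G ≃* Multiplicative (Fin n → ℤ)) :
    ∃ X : Set G, X.Finite ∧ (∀ x ∈ X, x⁻¹ ∈ X) ∧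
    Subgroup.closure X = ⊤ ∧ LocallyTestable 1 (Geo X) :=
  ⟨XSet e, XSet_finite e, XSet_symm e, XSet_gen e, XSet_lt e⟩

end Stmt17Aux

/-- For a finitely generated group `G`, the following are equivalent:
(1) `G` is free abelian; (2) some finite symmetric generating set `X` has `Geo(G,X)`
1-locally testable; (3) some finite symmetric generating set `X` has the syntactic
semigroup of `Geo(G,X)` idempotent. -/
theorem stmt17 {G : Type*} [Group G]
    (hfg : ∃ S : Set G, S.Finite ∧ Subgroup.closure S = ⊤) :
    List.TFAE
      [∃ n : ℕ, Nonempty (G ≃* Multiplicative (Fin n → ℤ)),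
       ∃ X : Set G, X.Finite ∧ (∀ x ∈ X, x⁻¹ ∈ X) ∧ Subgroup.closure X = ⊤ ∧
         LocallyTestable 1 (Geo X),
       ∃ X : Set G, X.Finite ∧ (∀ x ∈ X, x⁻¹ ∈ X) ∧ Subgroup.closure X = ⊤ ∧
         ∀ w : List X, w ≠ [] → SynCong (Geo X) w (w ++ w)] := by
  tfae_have 1 → 2 := by
    rintro ⟨n, ⟨e⟩⟩
    exact Stmt17Aux.one_to_two e
  tfae_have 2 → 3 := by
    rintro ⟨X, hfin, hsym, hgen, hlt⟩
    refine ⟨X, hfin, hsym, hgen, fun w hw s t => hlt _ _ ?_⟩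
    refine ⟨by simp, by simp, fun s' hs' => ?_⟩
    obtain ⟨a, rfl⟩ := List.length_eq_one_iff.mp hs'
    rw [Stmt17Aux.singleton_infix, Stmt17Aux.singleton_infix]
    simp only [List.mem_append]
    tauto
  tfae_have 3 → 1 := by
    rintro ⟨X, hfin, hsym, hgen, hid⟩
    exact Stmt17Aux.three_to_one hfg hfin hsym hgen hid
  tfae_finish
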